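/- Let s, t, k be positive integers with s + t − 1 ≥ k, and let G(t,s) be the graph consisting of a clique on vertices x_1,...,x_t, together with st disjoint copies K^{i,i'}_k of K_k (1 ≤ i ≤ t, 1 ≤ i' ≤ s), where each x_i is joined to exactly one vertex y_{i,i'} of each K^{i,i'}_k. Then ι_k(G(t,s)) = t. -/

import Mathlib

open SimpleGraph

variable {V : Type*}

/-- The closed neighborhood `N[S]` of a set of vertices. -/
def closedNbhd (G : SimpleGraph V) (S : Set V) : Set V :=
  {v | v ∈ S ∨ ∃ u ∈ S, G.Adj u v}

/-- The open neighborhood `N(S)` of a set of vertices. -/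
def openNbhd (G : SimpleGraph V) (S : Set V) : Set V :=
  {v | ∃ u ∈ S, G.Adj u v}

/-- A set is independent if no two of its vertices are adjacent. -/
def IsIndep (G : SimpleGraph V) (S : Set V) : Prop :=
  S.Pairwise fun u w => ¬ G.Adj u w

/-- `S` is `K_k`-isolating: `G - N[S]` contains no clique of size `k`. -/
def IsIsolating (G : SimpleGraph V) (k : ℕ) (S : Set V) : Prop :=
  ∀ T : Finset V, (↑T : Set V) ∩ closedNbhd G S = ∅ → G.IsClique ↑T → T.card ≠ k

/-- The `K_k`-isolation number `ι_k(G)`. -/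
noncomputable def iota [Fintype V] (G : SimpleGraph V) (k : ℕ) : ℕ :=
  sInf {n | ∃ S : Finset V, S.card = n ∧ IsIsolating G k ↑S}

/-- The independent `K_k`-isolation number `ι'_k(G)`. -/
noncomputable def iota' [Fintype V] (G : SimpleGraph V) (k : ℕ) : ℕ :=
  sInf {n | ∃ S : Finset V, S.card = n ∧ IsIsolating G k ↑S ∧ IsIndep G ↑S}

/-- A dominating set: every vertex lies in `N[S]`. -/
def IsDominating (G : SimpleGraph V) (S : Set V) : Prop :=
  ∀ v, v ∈ closedNbhd G S

/-- The domination number `γ(G)`. -/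
noncomputable def gammaNum [Fintype V] (G : SimpleGraph V) : ℕ :=
  sInf {n | ∃ S : Finset V, S.card = n ∧ IsDominating G ↑S}

/-- The independent domination number `i(G)`. -/
noncomputable def iNum [Fintype V] (G : SimpleGraph V) : ℕ :=
  sInf {n | ∃ S : Finset V, S.card = n ∧ IsDominating G ↑S ∧ IsIndep G ↑S}

/-- `G` is `K_{1,r}`-free: no induced subgraph isomorphic to the star `K_{1,r}`. -/
def K1rFree (G : SimpleGraph V) (r : ℕ) : Prop :=
  IsEmpty (completeBipartiteGraph (Fin 1) (Fin r) ↪g G)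

/-- Degree of `v` inside the vertex subset `T`. -/
def degIn [DecidableEq V] (G : SimpleGraph V) [DecidableRel G.Adj] (T : Finset V) (v : V) : ℕ :=
  (T.filter (G.Adj v)).card

/-- Vertices of `G(t,s)`: `inl i` is the clique vertex `xᵢ`; `inr (i, i', j)` is the `j`-th
vertex of the copy `K^{i,i'}_k`, with `y_{i,i'}` being the one with `j = 0`. -/
abbrev GtsVertex (t s k : ℕ) := Fin t ⊕ Fin t × Fin s × Fin k

/-- The graph `G(t,s)`: a clique on `x₁,…,x_t` and `s·t` disjoint copies of `K_k`, with
`xᵢ` joined to the vertex `y_{i,i'}` (index `0`) of each copy `K^{i,i'}_k`. -/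
def GraphGts (t s k : ℕ) : SimpleGraph (GtsVertex t s k) where
  Adj a b := match a, b with
    | Sum.inl i, Sum.inl j => i ≠ j
    | Sum.inl i, Sum.inr (a, _, c) => a = i ∧ (c : ℕ) = 0
    | Sum.inr (a, _, c), Sum.inl i => a = i ∧ (c : ℕ) = 0
    | Sum.inr (a, b, c), Sum.inr (a', b', c') => a = a' ∧ b = b' ∧ c ≠ c'
  symm := by
    constructor
    rintro (i | ⟨a, b, c⟩) (j | ⟨a', b', c'⟩) h
    · exact h.symm
    · exact h
    · exact h
    · exact ⟨h.1.symm, h.2.1.symm, h.2.2.symm⟩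
  loopless := by
    constructor
    rintro (i | ⟨a, b, c⟩) h
    · exact h rfl
    · exact h.2.2 rfl

instance (t s k : ℕ) : DecidableRel (GraphGts t s k).Adj := fun a b =>
  match a, b with
  | Sum.inl i, Sum.inl j => inferInstanceAs (Decidable (i ≠ j))
  | Sum.inl i, Sum.inr (a, _, c) => inferInstanceAs (Decidable (a = i ∧ (c : ℕ) = 0))
  | Sum.inr (a, _, c), Sum.inl i => inferInstanceAs (Decidable (a = i ∧ (c : ℕ) = 0))
  | Sum.inr (a, b, c), Sum.inr (a', b', c') =>
      inferInstanceAs (Decidable (a = a' ∧ b = b' ∧ c ≠ c'))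

/-- ι_k(G(t,s)) = t. -/
theorem stmt_12 (t s k : ℕ) (ht : 0 < t) (hs : 0 < s) (hk : 0 < k)
    (h : s + t - 1 ≥ k) :
    iota (GraphGts t s k) k = t := by

  classical
  -- the set whose infimum we take
  set A : Set ℕ := {n | ∃ S : Finset (GtsVertex t s k), S.card = n ∧
      IsIsolating (GraphGts t s k) k ↑S} with hA
  -- upper bound witness: all clique vertices xᵢ
  have hinj : Function.Injective (Sum.inl : Fin t → GtsVertex t s k) :=
    fun a b hab => Sum.inl.inj hab
  set S₀ : Finset (GtsVertex t s k) := Finset.univ.image Sum.inl with hS₀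
  have hcard₀ : S₀.card = t := by
    rw [hS₀, Finset.card_image_of_injective _ hinj, Finset.card_univ, Fintype.card_fin]
  have hiso : IsIsolating (GraphGts t s k) k ↑S₀ := by
    intro T hTdisj hTclique hTcard
    -- every vertex of T is inr with third coordinate ≠ 0
    have hmem : ∀ v ∈ T, ∃ (a : Fin t) (b : Fin s) (c : Fin k), v = Sum.inr (a, b, c) ∧ (c : ℕ) ≠ 0 := by
      intro v hv
      have hvN : v ∉ closedNbhd (GraphGts t s k) ↑S₀ := by
        intro hvN
        have : v ∈ (↑T : Set (GtsVertex t s k)) ∩ closedNbhd (GraphGts t s k) ↑S₀ := ⟨hv, hvN⟩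
        rw [hTdisj] at this; exact this
      match v with
      | Sum.inl i =>
        exact absurd (Or.inl (by simp [hS₀])) hvN
      | Sum.inr (a, b, c) =>
        refine ⟨a, b, c, rfl, fun hc => hvN (Or.inr ⟨Sum.inl a, by simp [hS₀], ⟨rfl, hc⟩⟩)⟩
    -- project onto the third coordinate
    let proj : GtsVertex t s k → Fin k := fun v => match v with
      | Sum.inl _ => ⟨0, hk⟩
      | Sum.inr (_, _, c) => c
    have hinjOn : Set.InjOn proj ↑T := by
      intro v hv w hw hvw
      by_contra hne
      obtain ⟨a, b, c, hv', _⟩ := hmem v hv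
      obtain ⟨a', b', c', hw', _⟩ := hmem w hw
      have hadj := hTclique hv hw hne
      subst hv' hw'
      exact hadj.2.2 (by simpa [proj] using hvw)
    have hsub : T.image proj ⊆ Finset.univ.erase ⟨0, hk⟩ := by
      intro c hc
      obtain ⟨v, hv, hvc⟩ := Finset.mem_image.mp hc
      obtain ⟨a, b, c', hv', hc'⟩ := hmem v hv
      subst hv'
      simp only [proj] at hvc
      refine Finset.mem_erase.mpr ⟨?_, Finset.mem_univ _⟩
      rw [← hvc]
      intro hceq
      exact hc' (by rw [hceq])
    have h1 : T.card = (T.image proj).card :=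
      (Finset.card_image_of_injOn hinjOn).symm
    have h2 : (T.image proj).card ≤ k - 1 := by
      calc (T.image proj).card ≤ (Finset.univ.erase (⟨0, hk⟩ : Fin k)).card :=
            Finset.card_le_card hsub
        _ = k - 1 := by rw [Finset.card_erase_of_mem (Finset.mem_univ _),
            Finset.card_univ, Fintype.card_fin]
    omega
  have htA : t ∈ A := ⟨S₀, hcard₀, hiso⟩
  -- lower bound: any isolating set has at least t elements
  have hlb : ∀ n ∈ A, t ≤ n := by
    rintro n ⟨S, hScard, hSiso⟩
    let first : GtsVertex t s k → Fin t := fun v => match v with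
      | Sum.inl i => i
      | Sum.inr (a, _, _) => a
    have hsurj : Set.SurjOn first ↑S ↑(Finset.univ : Finset (Fin t)) := by
      intro i _
      -- the clique K^{i,0}_k
      let T : Finset (GtsVertex t s k) :=
        Finset.univ.image (fun j : Fin k => Sum.inr (i, ⟨0, hs⟩, j))
      have hTinj : Function.Injective (fun j : Fin k =>
          (Sum.inr (i, ⟨0, hs⟩, j) : GtsVertex t s k)) := by
        intro a b hab
        simpa using hab
      have hTcard : T.card = k := by
        rw [Finset.card_image_of_injective _ hTinj, Finset.card_univ, Fintype.card_fin]
      have hTclique : (GraphGts t s k).IsClique ↑T := by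
        intro v hv w hw hvw
        simp only [T, Finset.coe_image, Set.mem_image] at hv hw
        obtain ⟨j, _, rfl⟩ := hv
        obtain ⟨j', _, rfl⟩ := hw
        exact ⟨rfl, rfl, fun hj => hvw (by rw [hj])⟩
      have hne : ¬ ((↑T : Set (GtsVertex t s k)) ∩ closedNbhd (GraphGts t s k) ↑S = ∅) := by
        intro hemp
        exact hSiso T hemp hTclique hTcard
      obtain ⟨v, hvT, hvN⟩ := Set.nonempty_iff_ne_empty.mpr hne
      simp only [T, Finset.coe_image, Set.mem_image] at hvT
      obtain ⟨j, _, rfl⟩ := hvT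
      rcases hvN with hvS | ⟨u, huS, hadj⟩
      · exact ⟨_, hvS, rfl⟩
      · refine ⟨u, huS, ?_⟩
        match u with
        | Sum.inl i' => exact hadj.1.symm
        | Sum.inr (a, b, c) => exact hadj.1
    have := Finset.card_le_card_of_surjOn first hsurj
    simpa [hScard] using this
  have hA_ne : A.Nonempty := ⟨t, htA⟩
  exact le_antisymm (Nat.sInf_le htA) (le_csInf hA_ne hlb)
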